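/- Let E be a compact subset of ℝⁿ and w a point of the unbounded connected component of ℝⁿ \ E. Then the map π_w : E → Sⁿ⁻¹, π_w(x) = (x − w)/|x − w|, is homotopic to a constant map. -/

import Mathlib

theorem stmt9 {n : ℕ} (E : Set (EuclideanSpace ℝ (Fin n))) (hE : IsCompact E)
    (w : EuclideanSpace ℝ (Fin n)) (hw : w ∉ E)
    (hunbdd : ¬ Bornology.IsBounded (connectedComponentIn Eᶜ w)) :
    ∃ p : EuclideanSpace ℝ (Fin n), ‖p‖ = 1 ∧
    ∃ H : EuclideanSpace ℝ (Fin n) × ℝ → EuclideanSpace ℝ (Fin n),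
      ContinuousOn H (E ×ˢ Set.Icc 0 1) ∧
      (∀ x ∈ E, ∀ t ∈ Set.Icc (0:ℝ) 1, ‖H (x, t)‖ = 1) ∧
      (∀ x ∈ E, H (x, 0) = ‖x - w‖⁻¹ • (x - w)) ∧
      (∀ x ∈ E, H (x, 1) = p) := by
  classical
  obtain ⟨R0, hR0⟩ := isBounded_iff_forall_norm_le.mp hE.isBounded
  set C := connectedComponentIn Eᶜ w with hC
  rw [isBounded_iff_forall_norm_le] at hunbdd
  push_neg at hunbdd
  obtain ⟨w', hw'C, hw'⟩ := hunbdd (max R0 0)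
  have hCopen : IsOpen C := (hE.isClosed.isOpen_compl).connectedComponentIn
  have hwc : w ∈ (Eᶜ : Set _) := hw
  have hCconn : IsConnected C := isConnected_connectedComponentIn_iff.mpr hwc
  have hpc : IsPathConnected C := (hCopen.isConnected_iff_isPathConnected).mp hCconn
  have hjoin : JoinedIn C w w' := hpc.joinedIn w (mem_connectedComponentIn hwc) w' hw'C
  obtain ⟨γ, hγ⟩ := hjoin
  set φ : EuclideanSpace ℝ (Fin n) × ℝ → EuclideanSpace ℝ (Fin n) :=
    fun q => (min 1 (2 - 2 * q.2)) • q.1 - γ.extend (2 * q.2) with hφ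
  have hφcont : Continuous φ := by
    apply Continuous.sub
    · exact (continuous_const.min (by fun_prop : Continuous fun q : EuclideanSpace ℝ (Fin n) × ℝ => 2 - 2 * q.2)).smul continuous_fst
    · exact γ.continuous_extend.comp (by fun_prop)
  have hext : ∀ s : ℝ, γ.extend s ∈ C := fun s => by
    rw [Path.extend]; exact hγ _
  have hne : ∀ q ∈ E ×ˢ Set.Icc (0:ℝ) 1, φ q ≠ 0 := by
    rintro ⟨x, t⟩ ⟨hx, ht0, ht1⟩
    rcases le_or_gt t (1/2) with h | h
    · have hmin : min 1 (2 - 2 * t) = 1 := min_eq_left (by linarith)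
      simp only [hφ, hmin, one_smul]
      rw [sub_ne_zero]
      intro hxy
      have hmem := hext (2 * t)
      rw [← hxy] at hmem
      exact (connectedComponentIn_subset _ _ hmem) hx
    · have h2t : (1:ℝ) ≤ 2 * t := by linarith
      have hmin : min 1 (2 - 2 * t) = 2 - 2 * t := min_eq_right (by linarith)
      have hextw : γ.extend (2 * t) = w' := by
        rw [Path.extend_of_one_le _ h2t]
      simp only [hφ, hmin, hextw]
      intro h0
      have hsm : ‖(2 - 2 * t) • x‖ ≤ ‖x‖ := by
        rw [norm_smul, Real.norm_eq_abs, abs_of_nonneg (by linarith)]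
        nlinarith [norm_nonneg x]
      have hxn : ‖x‖ ≤ max R0 0 := le_max_of_le_left (hR0 x hx)
      have : (2 - 2 * t) • x = w' := by rwa [sub_eq_zero] at h0
      rw [this] at hsm
      linarith [lt_of_lt_of_le hw' (hsm.trans hxn)]
  have hw'ne : w' ≠ 0 := by
    intro h; rw [h, norm_zero] at hw'; exact absurd hw' (not_lt.mpr (le_max_right _ _))
  refine ⟨-(‖w'‖⁻¹ • w'), ?_, fun q => ‖φ q‖⁻¹ • φ q, ?_, ?_, ?_, ?_⟩
  · rw [norm_neg]; exact norm_smul_inv_norm hw'ne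
  · exact ContinuousOn.smul
      ((hφcont.norm.continuousOn).inv₀ fun q hq => norm_ne_zero_iff.mpr (hne q hq))
      hφcont.continuousOn
  · intro x hx t ht
    exact norm_smul_inv_norm (hne (x, t) ⟨hx, ht⟩)
  · intro x hx
    have h0 : φ (x, 0) = x - w := by
      simp [hφ, Path.extend_zero]
    show ‖φ (x, 0)‖⁻¹ • φ (x, 0) = _
    rw [h0]
  · intro x hx
    have he : γ.extend 2 = w' := γ.extend_of_one_le (by norm_num)
    have h1 : φ (x, 1) = -w' := by
      norm_num [hφ, he]
    show ‖φ (x, 1)‖⁻¹ • φ (x, 1) = _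
    rw [h1, norm_neg, smul_neg]
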